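/- Every starry metric space fails to be doubling: if (X,d) is starry, then there is no constant K > 0 such that every closed ball B(x,r) in X can be covered by at most K closed balls of radius r/2. -/

import Mathlib

open Metric Set

/-- A metric space contains an `(A,η)`-approximate `n`-star. -/
def HasApproxStar (X : Type*) [PseudoMetricSpace X] (A η : ℝ) (n : ℕ) : Prop :=
  ∃ ρ : ℝ, 0 < ρ ∧ ∃ x : Fin (n + 1) → X,
    (∀ i j : Fin (n + 1), i ≠ 0 → j ≠ 0 → i ≠ j →
      (A - η) * ρ ≤ dist (x i) (x j) ∧ dist (x i) (x j) ≤ A * ρ) ∧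
    (∀ i : Fin (n + 1), i ≠ 0 → ρ ≤ dist (x 0) (x i) ∧ dist (x 0) (x i) ≤ (1 + η) * ρ)

/-- A metric space is starry if there are uniform `A > 1` and `0 < η < (A-1)/2` such that for
every `n` the space contains an `(Aₙ,η)`-approximate `n`-star for some `Aₙ ≥ A`. -/
def Starry (X : Type*) [PseudoMetricSpace X] : Prop :=
  ∃ A η : ℝ, 1 < A ∧ 0 < η ∧ η < (A - 1) / 2 ∧
    ∀ n : ℕ, ∃ An : ℝ, A ≤ An ∧ HasApproxStar X An η n

/-- `Ψ` is an increasing function `(0,∞) → (0,∞)`. -/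
def IncreasingOnPos (Ψ : ℝ → ℝ) : Prop :=
  (∀ t : ℝ, 0 < t → 0 < Ψ t) ∧ StrictMonoOn Ψ (Set.Ioi 0)

/-- A map `φ` is `Ψ`-quasisymmetric. -/
def IsQuasisymmetric {X Y : Type*} [PseudoMetricSpace X] [PseudoMetricSpace Y]
    (φ : X → Y) (Ψ : ℝ → ℝ) : Prop :=
  ∀ x y z : X, x ≠ y → x ≠ z → y ≠ z →
    dist (φ x) (φ y) / dist (φ x) (φ z) ≤ Ψ (dist x y / dist x z)

/-- A metric space is doubling: there is `K > 0` such that every closed ball `B(x,r)` can be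
covered by at most `K` closed balls of radius `r/2`. -/
def DoublingSpace (X : Type*) [PseudoMetricSpace X] : Prop :=
  ∃ K : ℕ, 0 < K ∧ ∀ (x : X) (r : ℝ), 0 < r →
    ∃ s : Finset X, s.card ≤ K ∧ closedBall x r ⊆ ⋃ y ∈ s, closedBall y (r / 2)

/-- Every starry metric space fails to be doubling. -/
theorem starry_not_doubling {X : Type*} [MetricSpace X] (hX : Starry X) :
    ¬ DoublingSpace X := by
  rintro ⟨K, hK, hcov⟩
  obtain ⟨A, η, hA, hη, hη2, hstar⟩ := hX
  obtain ⟨An, hAn, ρ, hρ, x, hsep, hnear⟩ := hstar (K + 1)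
  have hrpos : (0:ℝ) < (1 + η) * ρ := by positivity
  obtain ⟨s, hs, hsub⟩ := hcov (x 0) ((1 + η) * ρ) hrpos
  have key : ∀ i : Fin (K + 2), ∃ y, i ≠ 0 → y ∈ s ∧ dist (x i) y ≤ (1 + η) * ρ / 2 := by
    intro i
    by_cases hi : i = 0
    · exact ⟨x 0, fun h => absurd hi h⟩
    · have hx : x i ∈ closedBall (x 0) ((1 + η) * ρ) := by
        rw [mem_closedBall, dist_comm]
        exact (hnear i hi).2
      have := hsub hx
      simp only [mem_iUnion, mem_closedBall] at this
      obtain ⟨y, hy, hdy⟩ := this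
      exact ⟨y, fun _ => ⟨hy, hdy⟩⟩
  choose f hf using key
  have hcard : (Finset.univ.filter (fun i : Fin (K + 2) => i ≠ 0)).card ≤ s.card := by
    apply Finset.card_le_card_of_injOn f
    · intro i hi
      simp only [Finset.mem_coe, Finset.mem_filter] at hi
      exact (hf i hi.2).1
    · intro i hi j hj heq
      simp only [Finset.coe_filter, Set.mem_setOf_eq] at hi hj
      by_contra hij
      have h1 : (An - η) * ρ ≤ dist (x i) (x j) := (hsep i j hi.2 hj.2 hij).1
      have h2 : dist (x i) (x j) ≤ (1 + η) * ρ := by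
        calc dist (x i) (x j) ≤ dist (x i) (f i) + dist (f j) (x j) := by
              rw [heq]; exact dist_triangle _ _ _
          _ ≤ (1 + η) * ρ / 2 + (1 + η) * ρ / 2 := by
              have := (hf i hi.2).2
              have := (hf j hj.2).2
              rw [dist_comm (f j)]
              linarith
          _ = (1 + η) * ρ := by ring
      nlinarith
  have : (Finset.univ.filter (fun i : Fin (K + 2) => i ≠ 0)).card = K + 1 := by
    rw [Finset.filter_ne', Finset.card_erase_of_mem (Finset.mem_univ _)]
    simp
  omega
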